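/- arXiv:math/9211202 — 4 statements merged into one kernel-verified Lean document; each statement's English description precedes it below -/
import Mathlib

section
/- Let 𝔻 be the Hechler poset and let I ⊆ 𝔻 be a dense subset. Put A := { t ∈ ω^{<ω} : there exists f : ℕ → ℕ with (t,f) ∈ I }. Then every strictly increasing finite sequence t* of natural numbers belongs to R(A); that is, the Baumgartner–Dordal–Shelah rank rk(t*, A) is defined (equivalently, rk(t*, A) < ω₁) for every strictly increasing t* ∈ ω^{<ω}. -/
/-- A Hechler condition: a pair `(s, f)` where `s` is a finite sequence of naturals,
`f : ℕ → ℕ` is strictly increasing, and `s` is an initial segment of `f`. -/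
def HechlerCond (p : List ℕ × (ℕ → ℕ)) : Prop :=
  StrictMono p.2 ∧ ∀ i : Fin p.1.length, p.2 i = p.1.get i

/-- The order on the Hechler poset: `(s, f) ≤ (t, g)` iff `t` is an initial segment of `s`
and `f(n) ≥ g(n)` for all `n`. -/
def HechlerLe (p q : List ℕ × (ℕ → ℕ)) : Prop :=
  q.1 <+: p.1 ∧ ∀ n, q.2 n ≤ p.2 n

/-- The Baumgartner–Dordal–Shelah rank closure `R(A)`: the smallest set of strictly
increasing finite sequences containing every strictly increasing member of `A`, and
containing `t` whenever there are `m` and strictly increasing sequences `t_k` of length `m`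
extending `t` with `t_k(lh t) ≥ k` all lying in `R(A)`.  Membership `t ∈ R(A)` expresses
that the rank `rk(t, A)` is defined (equivalently `rk(t, A) < ω₁`). -/
inductive HechlerRk (A : Set (List ℕ)) : List ℕ → Prop
  | base {t : List ℕ} (hs : t.Pairwise (· < ·)) (ht : t ∈ A) : HechlerRk A t
  | step {t : List ℕ} (hs : t.Pairwise (· < ·)) (m : ℕ) (hm : t.length < m)
      (tk : ℕ → List ℕ)
      (hsorted : ∀ k, (tk k).Pairwise (· < ·))
      (hlen : ∀ k, (tk k).length = m)
      (hpre : ∀ k, t <+: tk k)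
      (hge : ∀ k, k ≤ (tk k).getD t.length 0)
      (hrk : ∀ k, HechlerRk A (tk k)) : HechlerRk A t

-- aux: element bound by foldr max
lemma mem_le_foldrMax (L : List ℕ) (a : ℕ) (h : a ∈ L) : a ≤ L.foldr max 0 := by
  induction L with
  | nil => simp at h
  | cons x xs ih =>
    rcases List.mem_cons.1 h with rfl | h'
    · exact le_max_left _ _
    · exact le_trans (ih h') (le_max_right _ _)

-- aux: prefix getD agreement
lemma prefix_getD (v w : List ℕ) (h : v <+: w) (i : ℕ) (hi : i < v.length) :
    w.getD i 0 = v.getD i 0 := by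
  obtain ⟨r, rfl⟩ := h
  exact List.getD_append _ _ _ _ hi

-- aux: extend a prefix by the next element
lemma prefix_snoc (v w : List ℕ) (h : v <+: w) (hl : v.length < w.length) :
    v ++ [w.getD v.length 0] <+: w := by
  obtain ⟨r, rfl⟩ := h
  cases r with
  | nil => simp at hl
  | cons x rs =>
    have hx : (v ++ x :: rs).getD v.length 0 = x := by
      rw [List.getD_append_right _ _ _ _ le_rfl]
      simp
    rw [hx]
    exact ⟨rs, by simp⟩

-- pigeonhole
lemma pigeon (val : ℕ → ℕ) (b : ℕ) (hb : ∀ c, val c < b) :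
    ∃ a, ∀ K, ∃ c, K ≤ c ∧ val c = a := by
  by_contra h
  push_neg at h
  choose K hK using h
  set c0 := (Finset.range b).sup K with hc0
  exact hK (val c0) c0 (Finset.le_sup (Finset.mem_range.2 (hb c0))) rfl

lemma lemR (A : Set (List ℕ)) : ∀ (d M : ℕ) (v : List ℕ) (s : ℕ → List ℕ),
    v.Pairwise (· < ·) →
    v.length + d < M →
    (∀ c, (s c).Pairwise (· < ·)) →
    (∀ c, (s c).length = M) →
    (∀ c, v <+: s c) →
    (∀ c, c ≤ (s c).getD (v.length + d) 0) →
    (∀ c, HechlerRk A (s c)) →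
    ∃ v', v <+: v' ∧ v'.length < M ∧ (∃ c, v' <+: s c) ∧ HechlerRk A v' := by
  intro d
  induction d with
  | zero =>
    intro M v s hsv hM hss hsl hsp hsg hsr
    refine ⟨v, List.prefix_refl v, by omega, ⟨0, hsp 0⟩, ?_⟩
    exact HechlerRk.step hsv M (by omega) s hss hsl hsp (by simpa using hsg) hsr
  | succ d ih =>
    intro M v s hsv hM hss hsl hsp hsg hsr
    by_cases hb : ∀ b, ∃ c, b ≤ (s c).getD v.length 0
    · choose σ hσ using hb
      refine ⟨v, List.prefix_refl v, by omega, ⟨0, hsp 0⟩, ?_⟩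
      exact HechlerRk.step hsv M (by omega) (fun k => s (σ k)) (fun k => hss _)
        (fun k => hsl _) (fun k => hsp _) hσ (fun k => hsr _)
    · push_neg at hb
      obtain ⟨b, hbb⟩ := hb
      obtain ⟨a, ha⟩ := pigeon (fun c => (s c).getD v.length 0) b hbb
      choose τ hτ1 hτ2 using ha
      have hlen' : ∀ K, v.length < (s (τ K)).length := by
        intro K; rw [hsl]; omega
      have hpre' : ∀ K, v ++ [a] <+: s (τ K) := by
        intro K
        have := prefix_snoc v (s (τ K)) (hsp (τ K)) (hlen' K)
        rwa [hτ2 K] at this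
      have hsv' : (v ++ [a]).Pairwise (· < ·) :=
        (hss (τ 0)).sublist (hpre' 0).sublist
      have hlen2 : (v ++ [a]).length = v.length + 1 := by simp
      obtain ⟨v', h1, h2, ⟨c, h3⟩, h4⟩ :=
        ih M (v ++ [a]) (fun K => s (τ K)) hsv' (by omega) (fun K => hss _)
          (fun K => hsl _) hpre'
          (by
            intro K
            have := hsg (τ K)
            have h5 : v.length + (d + 1) = (v ++ [a]).length + d := by simp; omega
            rw [← h5]
            exact le_trans (hτ1 K) this)
          (fun K => hsr _)
      exact ⟨v', (List.prefix_append v [a]).trans h1, h2, ⟨τ c, h3⟩, h4⟩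


/-- The set of "killing" thresholds at the next position above the finite approximation `L`. -/
def killSet (A : Set (List ℕ)) (t0 L : List ℕ) : Set ℕ :=
  {c | ∀ v : List ℕ, v.Pairwise (· < ·) → v.length = L.length + 1 → t0 <+: v →
    (∀ i, t0.length ≤ i → i < L.length → L.getD i 0 ≤ v.getD i 0) →
    c ≤ v.getD L.length 0 → ¬ HechlerRk A v}

noncomputable def nextVal (A : Set (List ℕ)) (t0 L : List ℕ) : ℕ :=
  max (L.foldr max 0 + 1) (sInf (killSet A t0 L))

noncomputable def seqL (A : Set (List ℕ)) (t0 : List ℕ) : ℕ → List ℕ :=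
  fun j => Nat.rec t0 (fun _ ih => ih ++ [nextVal A t0 ih]) j

lemma seqL_zero (A : Set (List ℕ)) (t0 : List ℕ) : seqL A t0 0 = t0 := rfl

lemma seqL_succ (A : Set (List ℕ)) (t0 : List ℕ) (j : ℕ) :
    seqL A t0 (j + 1) = seqL A t0 j ++ [nextVal A t0 (seqL A t0 j)] := rfl

noncomputable def fFun (A : Set (List ℕ)) (t0 : List ℕ) (n : ℕ) : ℕ :=
  if n < t0.length then t0.getD n 0 else nextVal A t0 (seqL A t0 (n - t0.length))

lemma killSet_mono (A : Set (List ℕ)) (t0 L : List ℕ) {c c' : ℕ} (h : c ∈ killSet A t0 L)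
    (hcc : c ≤ c') : c' ∈ killSet A t0 L := by
  intro v h1 h2 h3 h4 h5
  exact h v h1 h2 h3 h4 (le_trans hcc h5)

lemma nextVal_mem (A : Set (List ℕ)) (t0 L : List ℕ) (h : (killSet A t0 L).Nonempty) :
    nextVal A t0 L ∈ killSet A t0 L :=
  killSet_mono A t0 L (Nat.sInf_mem h) (le_max_right _ _)

lemma mem_le_foldrMax' (L : List ℕ) (a : ℕ) (h : a ∈ L) : a ≤ L.foldr max 0 := by
  induction L with
  | nil => simp at h
  | cons x xs ih =>
    rcases List.mem_cons.1 h with rfl | h'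
    · exact le_max_left _ _
    · exact le_trans (ih h') (le_max_right _ _)

lemma seqL_length (A : Set (List ℕ)) (t0 : List ℕ) (j : ℕ) :
    (seqL A t0 j).length = t0.length + j := by
  induction j with
  | zero => rfl
  | succ j ih => rw [seqL_succ]; simp [ih]; omega

lemma seqL_prefix_t0 (A : Set (List ℕ)) (t0 : List ℕ) (j : ℕ) : t0 <+: seqL A t0 j := by
  induction j with
  | zero => exact List.prefix_refl _
  | succ j ih => rw [seqL_succ]; exact ih.trans (List.prefix_append _ _)

lemma seqL_sorted (A : Set (List ℕ)) (t0 : List ℕ) (ht : t0.Pairwise (· < ·)) (j : ℕ) :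
    (seqL A t0 j).Pairwise (· < ·) := by
  induction j with
  | zero => exact ht
  | succ j ih =>
    rw [seqL_succ, List.pairwise_append]
    refine ⟨ih, List.pairwise_singleton _ _, ?_⟩
    intro a ha b hb
    rw [List.mem_singleton] at hb
    subst hb
    calc a ≤ (seqL A t0 j).foldr max 0 := mem_le_foldrMax' _ _ ha
    _ < (seqL A t0 j).foldr max 0 + 1 := Nat.lt_succ_self _
    _ ≤ nextVal A t0 (seqL A t0 j) := le_max_left _ _

lemma seqL_getD (A : Set (List ℕ)) (t0 : List ℕ) (j n : ℕ) (h : n < t0.length + j) :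
    (seqL A t0 j).getD n 0 = fFun A t0 n := by
  induction j with
  | zero =>
    rw [seqL_zero, fFun, if_pos (by omega)]
  | succ j ih =>
    rw [seqL_succ]
    by_cases hn : n < t0.length + j
    · rw [List.getD_append _ _ _ _ (by rw [seqL_length]; omega)]
      exact ih hn
    · have hn' : n = t0.length + j := by omega
      subst hn'
      rw [List.getD_append_right _ _ _ _ (by rw [seqL_length])]
      rw [seqL_length]
      simp [fFun, if_neg (by omega : ¬ t0.length + j < t0.length)]

lemma fFun_strictMono (A : Set (List ℕ)) (t0 : List ℕ) (ht : t0.Pairwise (· < ·)) :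
    StrictMono (fFun A t0) := by
  apply strictMono_nat_of_lt_succ
  intro n
  set j := n + 2 with hj
  have h1 : n < t0.length + j := by omega
  have h2 : n + 1 < t0.length + j := by omega
  rw [← seqL_getD A t0 j n h1, ← seqL_getD A t0 j (n+1) h2]
  have hs := seqL_sorted A t0 ht j
  have hl := seqL_length A t0 j
  have hget := (List.pairwise_iff_get.1 hs) ⟨n, by omega⟩ ⟨n+1, by omega⟩ (by simp)
  rwa [List.getD_eq_getElem _ _ (by omega), List.getD_eq_getElem _ _ (by omega)]

/-- Main Lemma (Baumgartner–Dordal, Shelah): if `I` is a dense subset of the Hechler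
poset `𝔻` and `A = { t : ∃ f, (t, f) ∈ I }`, then every strictly increasing finite
sequence `t*` has defined rank `rk(t*, A) < ω₁`, i.e. belongs to `R(A)`. -/
theorem hechler_main_lemma (I : Set (List ℕ × (ℕ → ℕ)))
    (hI : ∀ p ∈ I, HechlerCond p)
    (hdense : ∀ p : List ℕ × (ℕ → ℕ), HechlerCond p → ∃ q ∈ I, HechlerLe q p)
    (A : Set (List ℕ)) (hA : A = {t | ∃ f : ℕ → ℕ, (t, f) ∈ I})
    (tstar : List ℕ) (htstar : tstar.Pairwise (· < ·)) :
    HechlerRk A tstar := by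
  by_contra hbad
  -- if the invariant holds up to stage j, the kill set at stage j is nonempty
  have hkillne : ∀ j : ℕ,
      (∀ v : List ℕ, v.Pairwise (· < ·) → tstar <+: v → tstar.length < v.length →
        v.length ≤ tstar.length + j →
        (∀ i, tstar.length ≤ i → i < v.length → fFun A tstar i ≤ v.getD i 0) →
        ¬ HechlerRk A v) →
      (killSet A tstar (seqL A tstar j)).Nonempty := by
    intro j hinv
    by_contra hne
    rw [Set.not_nonempty_iff_eq_empty] at hne
    have hLlen := seqL_length A tstar j
    have hex : ∀ c : ℕ, ∃ v : List ℕ, v.Pairwise (· < ·) ∧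
        v.length = (seqL A tstar j).length + 1 ∧ tstar <+: v ∧
        (∀ i, tstar.length ≤ i → i < (seqL A tstar j).length →
          (seqL A tstar j).getD i 0 ≤ v.getD i 0) ∧
        c ≤ v.getD (seqL A tstar j).length 0 ∧ HechlerRk A v := by
      intro c
      have hall : c ∉ killSet A tstar (seqL A tstar j) := by rw [hne]; simp
      simp only [killSet, Set.mem_setOf_eq] at hall
      push_neg at hall
      exact hall
    choose s hs1 hs2 hs3 hs4 hs5 hs6 using hex
    obtain ⟨v', hp, hlt, ⟨c, hpc⟩, hW⟩ :=
      lemR A j (tstar.length + j + 1) tstar s htstar (by omega)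
        hs1 (fun c => by rw [hs2 c, hLlen]) hs3
        (fun c => by have := hs5 c; rwa [hLlen] at this) hs6
    rcases Nat.lt_or_ge tstar.length v'.length with hgt | hle
    · refine hinv v' ((hs1 c).sublist hpc.sublist) hp hgt (by omega) ?_ hW
      intro i h1 h2
      rw [← prefix_getD v' (s c) hpc i h2]
      have h2' : i < (seqL A tstar j).length := by rw [hLlen]; omega
      have := hs4 c i h1 h2'
      rwa [seqL_getD A tstar j i (by omega)] at this
    · have heq : tstar = v' := hp.eq_of_length (le_antisymm hp.length_le hle)
      exact hbad (heq ▸ hW)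
  -- the invariant: everything strictly above `fFun` extending `tstar` is unranked
  have hinv : ∀ j : ℕ, ∀ v : List ℕ, v.Pairwise (· < ·) → tstar <+: v →
      tstar.length < v.length → v.length ≤ tstar.length + j →
      (∀ i, tstar.length ≤ i → i < v.length → fFun A tstar i ≤ v.getD i 0) →
      ¬ HechlerRk A v := by
    intro j
    induction j with
    | zero => intro v _ _ h1 h2 _; omega
    | succ j ih =>
      intro v hv1 hv2 hv3 hv4 hv5
      rcases Nat.lt_or_ge v.length (tstar.length + j + 1) with hc | hc
      · exact ih v hv1 hv2 hv3 (by omega) hv5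
      · have hvlen : v.length = tstar.length + j + 1 := by omega
        have hkill := nextVal_mem A tstar (seqL A tstar j) (hkillne j ih)
        have hLlen := seqL_length A tstar j
        refine hkill v hv1 (by omega) hv2 ?_ ?_
        · intro i h1 h2
          rw [seqL_getD A tstar j i (by omega)]
          exact hv5 i h1 (by omega)
        · rw [hLlen]
          have := hv5 (tstar.length + j) (by omega) (by omega)
          rwa [show fFun A tstar (tstar.length + j) = nextVal A tstar (seqL A tstar j) by
            rw [fFun, if_neg (by omega), show tstar.length + j - tstar.length = j by omega]] at this
  -- apply density to the condition (tstar, fFun)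
  have hcond : HechlerCond (tstar, fFun A tstar) := by
    refine ⟨fFun_strictMono A tstar htstar, ?_⟩
    intro i
    show fFun A tstar i = tstar.get i
    rw [fFun, if_pos i.2, List.getD_eq_getElem _ _ i.2, List.get_eq_getElem]
  obtain ⟨⟨u, g⟩, hqI, hle⟩ := hdense (tstar, fFun A tstar) hcond
  obtain ⟨hpre, hdom⟩ := hle
  obtain ⟨hg, hug⟩ := hI _ hqI
  have husorted : u.Pairwise (· < ·) := by
    rw [List.pairwise_iff_get]
    intro i j hij
    have hi := hug i
    have hj := hug j
    simp only at hi hj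
    rw [← hi, ← hj]
    exact hg (show (i : ℕ) < (j : ℕ) from hij)
  have huW : HechlerRk A u := HechlerRk.base husorted (by rw [hA]; exact ⟨g, hqI⟩)
  rcases Nat.lt_or_ge tstar.length u.length with h | h
  · refine hinv (u.length - tstar.length) u husorted hpre h (by omega) ?_ huW
    intro i h1 h2
    have hgu : u.getD i 0 = g i := by
      rw [List.getD_eq_getElem _ _ h2]
      have := hug ⟨i, h2⟩
      simp only at this
      simpa using this.symm
    rw [hgu]
    exact hdom i
  · have heq : tstar = u := hpre.eq_of_length (le_antisymm hpre.length_le h)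
    exact hbad (heq ▸ huW)
end

section
/- Let 𝔻′ be the classical Hechler poset and let I ⊆ 𝔻′ be a dense subset. Put A := { t ∈ ω^{<ω} : there exists f : ℕ → ℕ with (t,f) ∈ I }. Then every t* ∈ Ω belongs to R′(A); that is, the rank rk(t*, A) on 𝔻′ is defined (equivalently, rk(t*, A) < ω₁) for every finite partial function t* from ω to ω. -/
/-- A classical Hechler condition: a pair `(s, f)` where `s` is a finite sequence of
naturals, `f : ℕ → ℕ`, and `s` is an initial segment of `f`. -/
def HechlerCond' (p : List ℕ × (ℕ → ℕ)) : Prop :=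
  ∀ i : Fin p.1.length, p.2 i = p.1.get i

/-- The order on the classical Hechler poset `𝔻′`: `(s, f) ≤ (t, g)` iff `t` is an
initial segment of `s` and `f(n) ≥ g(n)` for all `n`. -/
def HechlerLe' (p q : List ℕ × (ℕ → ℕ)) : Prop :=
  q.1 <+: p.1 ∧ ∀ n, q.2 n ≤ p.2 n

/-- Elements of `Ω`: finite partial functions from `ω` to `ω`, represented as
`ℕ → Option ℕ` with finite domain. -/
def FinitePartial (t : ℕ → Option ℕ) : Prop := {i | t i ≠ none}.Finite

/-- The partial function corresponding to a finite sequence. -/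
def listToPartial (s : List ℕ) : ℕ → Option ℕ := fun i => s[i]?

/-- The rank closure `R′(A)` for the classical Hechler poset: the smallest subset of `Ω`
containing (the partial functions corresponding to) all members of `A`, and containing `t`
whenever there are a finite `M ⊆ ω` properly containing `dom t` and functions
`t_k : M → ω` extending `t`, all in `R′(A)`, with `t_{k₁}(i) ≠ t_{k₂}(i)` for all
`i ∈ M \ dom t` and `k₁ ≠ k₂`.  Membership `t ∈ R′(A)` expresses that the rank
`rk(t, A)` on `𝔻′` is defined (equivalently `rk(t, A) < ω₁`). -/
inductive HechlerRk' (A : Set (List ℕ)) : (ℕ → Option ℕ) → Prop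
  | base {s : List ℕ} (hs : s ∈ A) : HechlerRk' A (listToPartial s)
  | step {t : ℕ → Option ℕ} (ht : FinitePartial t) (M : Finset ℕ)
      (hM : {i | t i ≠ none} ⊂ (M : Set ℕ))
      (tk : ℕ → ℕ → Option ℕ)
      (hdom : ∀ k i, tk k i ≠ none ↔ i ∈ M)
      (hext : ∀ k i, t i ≠ none → tk k i = t i)
      (hdiff : ∀ i ∈ M, t i = none → ∀ k₁ k₂ : ℕ, k₁ ≠ k₂ → tk k₁ i ≠ tk k₂ i)
      (hrk : ∀ k, HechlerRk' A (tk k)) : HechlerRk' A t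



/-- simple recursion on ℕ -/
def seqRec (init : ℕ) (step : ℕ → ℕ) : ℕ → ℕ
  | 0 => init
  | k+1 => step (seqRec init step k)

lemma avoid_list (w : ℕ → Option ℕ) (hw : ∀ o, ∃ B, ∀ k, B ≤ k → w k ≠ o) :
    ∀ L : List (Option ℕ), ∃ B, ∀ k, B ≤ k → w k ∉ L := by
  intro L
  induction L with
  | nil => exact ⟨0, by simp⟩
  | cons o L ih =>
    obtain ⟨B1, h1⟩ := hw o
    obtain ⟨B2, h2⟩ := ih
    refine ⟨max B1 B2, fun k hk => ?_⟩
    simp only [List.mem_cons, not_or]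
    exact ⟨h1 k (le_trans (le_max_left _ _) hk), h2 k (le_trans (le_max_right _ _) hk)⟩

lemma exists_injective_subseq (w : ℕ → Option ℕ)
    (hw : ∀ o : Option ℕ, ∃ B, ∀ k, B ≤ k → w k ≠ o) :
    ∃ e : ℕ → ℕ, StrictMono e ∧ (∀ k, w (e k) ≠ none) ∧
      ∀ k₁ k₂, k₁ < k₂ → w (e k₁) ≠ w (e k₂) := by
  have hP : ∀ m, ∃ k, m ≤ k ∧ w k ≠ none ∧ ∀ l, l < m → w k ≠ w l := by
    intro m
    obtain ⟨B, hB⟩ := avoid_list w hw (none :: (List.range m).map w)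
    refine ⟨max B m, le_max_right _ _, ?_, ?_⟩
    · intro h
      exact hB _ (le_max_left _ _) (List.mem_cons.mpr (Or.inl h))
    · intro l hl h
      apply hB (max B m) (le_max_left _ _)
      simp only [List.mem_cons, List.mem_map]
      exact Or.inr ⟨l, ⟨List.mem_range.mpr hl, h.symm⟩⟩
  choose next h1 h2 h3 using hP
  refine ⟨seqRec (next 0) (fun x => next (x+1)), ?_, ?_, ?_⟩
  · apply strictMono_nat_of_lt_succ
    intro k
    exact lt_of_lt_of_le (Nat.lt_succ_self _) (h1 _)
  · intro k
    cases k with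
    | zero => exact h2 0
    | succ m => exact h2 _
  · intro k₁ k₂ hlt
    cases k₂ with
    | zero => omega
    | succ m =>
      have hmono : StrictMono (seqRec (next 0) (fun x => next (x+1))) := by
        apply strictMono_nat_of_lt_succ
        intro k
        exact lt_of_lt_of_le (Nat.lt_succ_self _) (h1 _)
      have hle : seqRec (next 0) (fun x => next (x+1)) k₁ <
          seqRec (next 0) (fun x => next (x+1)) m + 1 := by
        have := hmono.le_iff_le.mpr (Nat.lt_succ_iff.mp hlt)
        omega
      intro h
      exact h3 (seqRec (next 0) (fun x => next (x+1)) m + 1) _ hle h.symm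

open Filter in
lemma thin (v : ℕ → ℕ → Option ℕ) : ∀ n : ℕ,
    ∃ g : ℕ → ℕ, StrictMono g ∧ ∀ i, i < n →
      (∀ k, v (g k) i = v (g 0) i) ∨
      ((∀ k, v (g k) i ≠ none) ∧ ∀ k₁ k₂, k₁ ≠ k₂ → v (g k₁) i ≠ v (g k₂) i) := by
  intro n
  induction n with
  | zero => exact ⟨id, strictMono_id, by omega⟩
  | succ n ih =>
    obtain ⟨g, hg, hgi⟩ := ih
    by_cases hc : ∃ o, ∀ m, ∃ k, m ≤ k ∧ v (g k) n = o
    · obtain ⟨o, ho⟩ := hc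
      have hfr : ∃ᶠ k in atTop, v (g k) n = o := by
        rw [frequently_atTop]
        intro m
        obtain ⟨k, hk1, hk2⟩ := ho m
        exact ⟨k, hk1, hk2⟩
      obtain ⟨e, he, heo⟩ := extraction_of_frequently_atTop hfr
      refine ⟨g ∘ e, hg.comp he, ?_⟩
      intro i hi
      rcases Nat.lt_succ_iff_lt_or_eq.mp hi with hi | rfl
      · rcases hgi i hi with hcon | hinj
        · left; intro k
          show v (g (e k)) i = v (g (e 0)) i
          rw [hcon (e k), hcon (e 0)]
        · right
          refine ⟨fun k => hinj.1 (e k), fun k₁ k₂ hne => hinj.2 _ _ ?_⟩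
          exact fun h => hne (he.injective h)
      · left; intro k
        show v (g (e k)) i = v (g (e 0)) i
        rw [heo k, heo 0]
    · push_neg at hc
      have hc' : ∀ o : Option ℕ, ∃ B, ∀ k, B ≤ k → v (g k) n ≠ o := by
        intro o
        obtain ⟨m, hm⟩ := hc o
        exact ⟨m, hm⟩
      obtain ⟨e, he, hnone, hinj⟩ := exists_injective_subseq (fun k => v (g k) n) hc'
      refine ⟨g ∘ e, hg.comp he, ?_⟩
      intro i hi
      rcases Nat.lt_succ_iff_lt_or_eq.mp hi with hi | rfl
      · rcases hgi i hi with hcon | hinj'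
        · left; intro k
          show v (g (e k)) i = v (g (e 0)) i
          rw [hcon (e k), hcon (e 0)]
        · right
          refine ⟨fun k => hinj'.1 (e k), fun k₁ k₂ hne => hinj'.2 _ _ ?_⟩
          exact fun h => hne (he.injective h)
      · right
        refine ⟨fun k => hnone k, ?_⟩
        intro k₁ k₂ hne
        rcases Nat.lt_or_ge k₁ k₂ with h | h
        · exact hinj k₁ k₂ h
        · have h' : k₂ < k₁ := by omega
          exact fun hh => (hinj k₂ k₁ h') hh.symm

def ConP (s p : List ℕ) (u : ℕ → Option ℕ) : Prop :=
  (∀ i, i < s.length → u i = s[i]?) ∧ (∀ i, p.length ≤ i → u i = none) ∧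
    (∀ i v, s.length ≤ i → u i = some v → p.getD i 0 ≤ v)

def GBP (A : Set (List ℕ)) (s p : List ℕ) (b : ℕ) : Prop :=
  ∀ u, ConP s p u → ∀ j, b ≤ j → ¬ HechlerRk' A (Function.update u p.length (some j))

open Classical in
noncomputable def Fnext (A : Set (List ℕ)) (s p : List ℕ) : ℕ :=
  if h : ∃ b, GBP A s p b then h.choose else 0

lemma Fnext_spec {A : Set (List ℕ)} {s p : List ℕ} (h : ∃ b, GBP A s p b) :
    GBP A s p (Fnext A s p) := by
  rw [Fnext, dif_pos h]
  exact h.choose_spec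

noncomputable def fp (A : Set (List ℕ)) (s : List ℕ) : ℕ → List ℕ
  | 0 => []
  | n+1 => fp A s n ++ [Fnext A s (fp A s n)]

noncomputable def ff (A : Set (List ℕ)) (s : List ℕ) (n : ℕ) : ℕ := Fnext A s (fp A s n)

lemma fp_eq (A : Set (List ℕ)) (s : List ℕ) : ∀ n, fp A s n = (List.range n).map (ff A s) := by
  intro n
  induction n with
  | zero => rfl
  | succ n ih =>
    rw [fp, ih, List.range_succ, List.map_append, ← ih]
    rfl

lemma fp_length (A : Set (List ℕ)) (s : List ℕ) (n : ℕ) : (fp A s n).length = n := by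
  rw [fp_eq]; simp

lemma fp_getD (A : Set (List ℕ)) (s : List ℕ) {i n : ℕ} (h : i < n) :
    (fp A s n).getD i 0 = ff A s i := by
  rw [fp_eq]
  rw [List.getD_eq_getElem _ _ (by simpa using h)]
  simp

def ConN (A : Set (List ℕ)) (s : List ℕ) (n : ℕ) (u : ℕ → Option ℕ) : Prop :=
  ConP s (fp A s n) u

lemma conN_iff (A : Set (List ℕ)) (s : List ℕ) (n : ℕ) (u : ℕ → Option ℕ) :
    ConN A s n u ↔ (∀ i, i < s.length → u i = s[i]?) ∧ (∀ i, n ≤ i → u i = none) ∧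
      (∀ i v, s.length ≤ i → u i = some v → ff A s i ≤ v) := by
  constructor
  · rintro ⟨h1, h2, h3⟩
    refine ⟨h1, fun i hi => h2 i (by rwa [fp_length]), fun i v hi hv => ?_⟩
    by_cases hin : i < n
    · rw [← fp_getD A s hin]
      exact h3 i v hi hv
    · exact absurd hv (by rw [h2 i (by rw [fp_length]; omega)]; simp)
  · rintro ⟨h1, h2, h3⟩
    refine ⟨h1, fun i hi => h2 i (by rwa [fp_length] at hi), fun i v hi hv => ?_⟩
    by_cases hin : i < n
    · rw [fp_getD A s hin]
      exact h3 i v hi hv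
    · exact absurd hv (by rw [h2 i (by omega)]; simp)

theorem Qall (A : Set (List ℕ)) (s : List ℕ) (hbad : ¬ HechlerRk' A (listToPartial s)) :
    ∀ n, (∀ u, ConN A s n u → ¬ HechlerRk' A u) ∧ (∃ b, GBP A s (fp A s n) b) := by
  intro n
  induction n using Nat.strong_induction_on with
  | _ n ih =>
  classical
  have parta : ∀ u, ConN A s n u → ¬ HechlerRk' A u := by
    intro u hu hD
    obtain ⟨hu1, hu2, hu3⟩ := (conN_iff A s n u).mp hu
    set E : Finset ℕ := (Finset.range n).filter (fun i => s.length ≤ i ∧ u i ≠ none) with hE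
    by_cases hEne : E.Nonempty
    · set i0 := E.max' hEne with hi0
      have hi0mem : i0 ∈ E := E.max'_mem hEne
      rw [hE, Finset.mem_filter, Finset.mem_range] at hi0mem
      obtain ⟨hi0n, hi0s, hi0ne⟩ := hi0mem
      obtain ⟨v, hv⟩ := Option.ne_none_iff_exists'.mp hi0ne
      have hvge : ff A s i0 ≤ v := hu3 i0 v hi0s hv
      set u' := Function.update u i0 none with hu'def
      have hu' : ConN A s i0 u' := by
        rw [conN_iff]
        refine ⟨?_, ?_, ?_⟩
        · intro i hi
          rw [hu'def, Function.update_of_ne (by omega)]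
          exact hu1 i hi
        · intro i hi
          by_cases hii : i = i0
          · subst hii; rw [hu'def]; exact Function.update_self _ _ _
          · rw [hu'def, Function.update_of_ne hii]
            by_cases hin : n ≤ i
            · exact hu2 i hin
            · by_contra hne
              have hmem : i ∈ E := by
                rw [hE, Finset.mem_filter, Finset.mem_range]
                exact ⟨by omega, by omega, hne⟩
              have := E.le_max' i hmem
              omega
        · intro i v' hi hv'
          by_cases hii : i = i0
          · exfalso; rw [hu'def, hii, Function.update_self] at hv'; cases hv'
          · rw [hu'def, Function.update_of_ne hii] at hv'
            exact hu3 i v' hi hv'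
      have hex : ∃ b, GBP A s (fp A s i0) b := (ih i0 hi0n).2
      have hspec := Fnext_spec hex
      have heq : Function.update u' (fp A s i0).length (some v) = u := by
        rw [fp_length]
        funext i
        by_cases hii : i = i0
        · subst hii; rw [Function.update_self]; exact hv.symm
        · rw [Function.update_of_ne hii, hu'def, Function.update_of_ne hii]
      exact hspec u' hu' v hvge (heq ▸ hD)
    · have hus : u = listToPartial s := by
        funext i
        by_cases his : i < s.length
        · rw [hu1 i his]; rfl
        · have h1 : u i = none := by
            by_cases hin : n ≤ i
            · exact hu2 i hin
            · by_contra hne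
              exact hEne ⟨i, by
                rw [hE, Finset.mem_filter, Finset.mem_range]
                exact ⟨by omega, by omega, hne⟩⟩
          rw [h1]
          show (none : Option ℕ) = s[i]?
          rw [List.getElem?_eq_none (by omega)]
      exact hbad (hus ▸ hD)
  refine ⟨parta, ?_⟩
  by_cases hns : s.length ≤ n
  swap
  · refine ⟨0, fun u hu j hj hD => ?_⟩
    obtain ⟨h1, h2, h3⟩ := hu
    have ha := h1 n (by omega)
    have hb := h2 n (by rw [fp_length])
    rw [hb] at ha
    rw [List.getElem?_eq_getElem (by omega)] at ha
    cases ha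
  by_contra hnb
  push_neg at hnb
  have HB : ∀ b, ∃ u, ConN A s n u ∧ ∃ j, b ≤ j ∧
      HechlerRk' A (Function.update u n (some j)) := by
    intro b
    have h := hnb b
    rw [GBP] at h
    push_neg at h
    obtain ⟨u, hu, j, hj, hD⟩ := h
    exact ⟨u, hu, j, hj, by rwa [fp_length] at hD⟩
  choose U hU J hJ hD using HB
  set bs : ℕ → ℕ := seqRec 0 (fun x => J x + 1) with hbs
  set uu : ℕ → ℕ → Option ℕ := fun k => U (bs k) with huu
  set jj : ℕ → ℕ := fun k => J (bs k) with hjj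
  have hjmono : StrictMono jj := by
    apply strictMono_nat_of_lt_succ
    intro k
    have h1 : bs (k+1) = jj k + 1 := rfl
    have h2 : bs (k+1) ≤ jj (k+1) := hJ (bs (k+1))
    omega
  set t : ℕ → ℕ → Option ℕ := fun k => Function.update (uu k) n (some (jj k)) with ht
  have hDt : ∀ k, HechlerRk' A (t k) := fun k => hD (bs k)
  have hCu : ∀ k, ConN A s n (uu k) := fun k => hU (bs k)
  obtain ⟨g, hg, hgi⟩ := thin t (n+1)
  have htn : ∀ k, t k n = some (jj k) := fun k => Function.update_self _ _ _
  have htlt : ∀ k i, i ≠ n → t k i = uu k i := fun k i hi => Function.update_of_ne hi _ _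
  have hnone : ∀ k i, n ≤ i → i ≠ n → t k i = none := by
    intro k i h1 h2
    rw [htlt k i h2]
    exact ((conN_iff A s n (uu k)).mp (hCu k)).2.1 i h1
  set ub : ℕ → Option ℕ :=
    fun i => if (i < n ∧ ∀ k, t (g k) i = t (g 0) i) then t (g 0) i else none with hub
  set M : Finset ℕ := (Finset.range (n+1)).filter (fun i => t (g 0) i ≠ none) with hM
  have hgiS : ∀ i, i < n → (∀ k, t (g k) i = t (g 0) i) ∨
      ((∀ k, t (g k) i ≠ none) ∧ ∀ k₁ k₂, k₁ ≠ k₂ → t (g k₁) i ≠ t (g k₂) i) :=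
    fun i hi => hgi i (by omega)
  have hnM : n ∈ M := by
    rw [hM, Finset.mem_filter, Finset.mem_range]
    exact ⟨by omega, by rw [htn]; simp⟩
  have hdom : ∀ k i, t (g k) i ≠ none ↔ i ∈ M := by
    intro k i
    rw [hM, Finset.mem_filter, Finset.mem_range]
    constructor
    · intro h
      have hin : i < n + 1 := by
        by_contra hc
        exact h (hnone (g k) i (by omega) (by omega))
      refine ⟨hin, ?_⟩
      by_cases hii : i = n
      · subst hii; rw [htn]; simp
      · rcases hgiS i (by omega) with hcon | hinj
        · rw [← hcon k]; exact h
        · exact hinj.1 0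
    · rintro ⟨hin, h0⟩
      by_cases hii : i = n
      · subst hii; rw [htn]; simp
      · rcases hgiS i (by omega) with hcon | hinj
        · rw [hcon k]; exact h0
        · exact hinj.1 k
  have hext : ∀ k i, ub i ≠ none → t (g k) i = ub i := by
    intro k i h
    simp only [hub] at h ⊢
    by_cases hc : (i < n ∧ ∀ k, t (g k) i = t (g 0) i)
    · rw [if_pos hc]; exact hc.2 k
    · rw [if_neg hc] at h; exact absurd rfl h
  have hdiff : ∀ i ∈ M, ub i = none → ∀ k₁ k₂ : ℕ, k₁ ≠ k₂ → t (g k₁) i ≠ t (g k₂) i := by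
    intro i hiM h0 k₁ k₂ hne
    rw [hM, Finset.mem_filter, Finset.mem_range] at hiM
    by_cases hii : i = n
    · subst hii
      rw [htn, htn]
      intro hc
      have : jj (g k₁) = jj (g k₂) := Option.some.inj hc
      exact hne (hg.injective (hjmono.injective this))
    · have hin : i < n := by omega
      rcases hgiS i hin with hcon | hinj
      · exfalso
        simp only [hub, if_pos (⟨hin, hcon⟩ : i < n ∧ ∀ k, t (g k) i = t (g 0) i)] at h0
        exact hiM.2 h0
      · exact hinj.2 k₁ k₂ hne
  have hsub : {i | ub i ≠ none} ⊂ (M : Set ℕ) := by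
    constructor
    · intro i hi
      simp only [Set.mem_setOf_eq] at hi
      have he := hext 0 i hi
      rw [Finset.mem_coe]
      rw [← hdom 0 i, he]
      exact hi
    · intro hsup
      have hmem := hsup (Finset.mem_coe.mpr hnM)
      simp only [Set.mem_setOf_eq] at hmem
      apply hmem
      simp only [hub]
      rw [if_neg]
      rintro ⟨h, _⟩
      omega
  have hfinub : FinitePartial ub := by
    apply Set.Finite.subset (Finset.range n).finite_toSet
    intro i hi
    simp only [Set.mem_setOf_eq] at hi
    simp only [hub] at hi
    by_cases hc : (i < n ∧ ∀ k, t (g k) i = t (g 0) i)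
    · simp only [Finset.coe_range, Set.mem_Iio]
      exact hc.1
    · rw [if_neg hc] at hi; exact absurd rfl hi
  have hDub : HechlerRk' A ub :=
    HechlerRk'.step hfinub M hsub (fun k => t (g k)) hdom hext hdiff (fun k => hDt (g k))
  have hCub : ConN A s n ub := by
    rw [conN_iff]
    refine ⟨?_, ?_, ?_⟩
    · intro i hi
      have hcon : ∀ k, t (g k) i = t (g 0) i := by
        intro k
        rw [htlt _ i (by omega), htlt _ i (by omega)]
        rw [((conN_iff A s n (uu (g k))).mp (hCu (g k))).1 i hi,
          ((conN_iff A s n (uu (g 0))).mp (hCu (g 0))).1 i hi]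
      simp only [hub]
      rw [if_pos ⟨by omega, hcon⟩]
      rw [htlt _ i (by omega)]
      exact ((conN_iff A s n (uu (g 0))).mp (hCu (g 0))).1 i hi
    · intro i hi
      simp only [hub]
      rw [if_neg]
      rintro ⟨h, _⟩
      omega
    · intro i v hi hv
      simp only [hub] at hv
      by_cases hc : (i < n ∧ ∀ k, t (g k) i = t (g 0) i)
      · rw [if_pos hc] at hv
        have huv : uu (g 0) i = some v := by
          rw [← htlt (g 0) i (by omega)]
          exact hv
        exact ((conN_iff A s n (uu (g 0))).mp (hCu (g 0))).2.2 i v hi huv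
      · rw [if_neg hc] at hv
        cases hv
  exact parta ub hCub hDub

lemma rank_of_list (I : Set (List ℕ × (ℕ → ℕ)))
    (hI : ∀ p ∈ I, HechlerCond' p)
    (hdense : ∀ p : List ℕ × (ℕ → ℕ), HechlerCond' p → ∃ q ∈ I, HechlerLe' q p)
    (A : Set (List ℕ)) (hA : A = {t | ∃ f : ℕ → ℕ, (t, f) ∈ I})
    (s : List ℕ) : HechlerRk' A (listToPartial s) := by
  classical
  by_contra hbad
  set fhat : ℕ → ℕ := fun i => if h : i < s.length then s.get ⟨i, h⟩ else ff A s i with hfhat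
  have hcond : HechlerCond' (s, fhat) := by
    rintro ⟨i, hi⟩
    simp only [hfhat]
    exact dif_pos hi
  obtain ⟨⟨s', f'⟩, hqI, hpre, hle⟩ := hdense (s, fhat) hcond
  have hcond' := hI _ hqI
  have hsA : s' ∈ A := by
    rw [hA]
    exact ⟨f', hqI⟩
  have hCon : ConN A s s'.length (listToPartial s') := by
    rw [conN_iff]
    obtain ⟨r, hr⟩ := hpre
    have hr' : s ++ r = s' := hr
    refine ⟨?_, ?_, ?_⟩
    · intro i hi
      show s'[i]? = s[i]?
      rw [← hr']
      exact List.getElem?_append_left hi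
    · intro i hi
      show s'[i]? = none
      exact List.getElem?_eq_none hi
    · intro i v hi hv
      simp only [listToPartial] at hv
      have his' : i < s'.length := by
        by_contra hc
        rw [List.getElem?_eq_none (by omega)] at hv
        cases hv
      have hv' : s'.get ⟨i, his'⟩ = v := by
        rw [List.getElem?_eq_getElem his'] at hv
        exact Option.some.inj hv
      have h1 : f' i = v := by
        rw [← hv']
        exact hcond' ⟨i, his'⟩
      have h2 : (if h : i < s.length then s.get ⟨i, h⟩ else ff A s i) ≤ f' i := hle i
      rw [dif_neg (show ¬ i < s.length by omega)] at h2
      omega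
  exact (Qall A s hbad s'.length).1 (listToPartial s') hCon (HechlerRk'.base hsA)

theorem hechler_main_lemma'_aux (I : Set (List ℕ × (ℕ → ℕ)))
    (hI : ∀ p ∈ I, HechlerCond' p)
    (hdense : ∀ p : List ℕ × (ℕ → ℕ), HechlerCond' p → ∃ q ∈ I, HechlerLe' q p)
    (A : Set (List ℕ)) (hA : A = {t | ∃ f : ℕ → ℕ, (t, f) ∈ I})
    (tstar : ℕ → Option ℕ) (htstar : FinitePartial tstar) :
    HechlerRk' A tstar := by
  classical
  obtain ⟨B, hB⟩ := htstar.bddAbove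
  set n0 : ℕ := B + 1 with hn0
  have hbound : ∀ i, tstar i ≠ none → i < n0 := by
    intro i hi
    have := hB hi
    omega
  refine HechlerRk'.step htstar (Finset.range (n0+1)) ?_
    (fun k i => if i < n0+1 then some ((tstar i).getD k) else none) ?_ ?_ ?_ ?_
  · constructor
    · intro i hi
      simp only [Set.mem_setOf_eq] at hi
      simp only [Finset.coe_range, Set.mem_Iio]
      have := hbound i hi
      omega
    · intro hsup
      have hmem : (n0 : ℕ) ∈ (Finset.range (n0+1) : Finset ℕ) := by
        rw [Finset.mem_range]; omega
      have := hsup (Finset.mem_coe.mpr hmem)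
      simp only [Set.mem_setOf_eq] at this
      apply this
      by_contra hc
      have := hbound n0 hc
      omega
  · intro k i
    rw [Finset.mem_range]
    by_cases hc : i < n0 + 1
    · simp [hc]
    · simp [hc]
  · intro k i hi
    have hin : i < n0 + 1 := by
      have := hbound i hi
      omega
    obtain ⟨v, hv⟩ := Option.ne_none_iff_exists'.mp hi
    show (if i < n0+1 then some ((tstar i).getD k) else none) = tstar i
    rw [if_pos hin, hv]
    rfl
  · intro i hiM hnone k₁ k₂ hne
    show (if i < n0+1 then some ((tstar i).getD k₁) else none) ≠
      (if i < n0+1 then some ((tstar i).getD k₂) else none)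
    by_cases hc : i < n0 + 1
    · rw [if_pos hc, if_pos hc, hnone]
      simp only [Option.getD_none, ne_eq, Option.some.injEq]
      exact hne
    · exact absurd (Finset.mem_range.mp hiM) hc
  · intro k
    have heq : (fun i => if i < n0+1 then some ((tstar i).getD k) else none) =
        listToPartial ((List.range (n0+1)).map (fun i => (tstar i).getD k)) := by
      funext i
      show _ = ((List.range (n0+1)).map (fun i => (tstar i).getD k))[i]?
      by_cases hc : i < n0 + 1
      · rw [if_pos hc, List.getElem?_map, List.getElem?_range hc]
        rfl
      · rw [if_neg hc, List.getElem?_map, List.getElem?_eq_none (by simpa using not_lt.mp hc)]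
        rfl
    show HechlerRk' A (fun i => if i < n0+1 then some ((tstar i).getD k) else none)
    rw [heq]
    exact rank_of_list I hI hdense A hA _

/-- Main Lemma for the classical Hechler poset `𝔻′`: if `I ⊆ 𝔻′` is dense and
`A = { t : ∃ f, (t, f) ∈ I }`, then every finite partial function `t*` from `ω` to `ω`
has defined rank, i.e. belongs to `R′(A)`. -/
theorem hechler_main_lemma' (I : Set (List ℕ × (ℕ → ℕ)))
    (hI : ∀ p ∈ I, HechlerCond' p)
    (hdense : ∀ p : List ℕ × (ℕ → ℕ), HechlerCond' p → ∃ q ∈ I, HechlerLe' q p)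
    (A : Set (List ℕ)) (hA : A = {t | ∃ f : ℕ → ℕ, (t, f) ∈ I})
    (tstar : ℕ → Option ℕ) (htstar : FinitePartial tstar) :
    HechlerRk' A tstar := by
  exact hechler_main_lemma'_aux I hI hdense A hA tstar htstar
end

section
/- If there exists a Luzin set of cardinality 2^{ℵ₀}, then cov(𝓜) = 2^{ℵ₀}: the least cardinality of a family of meager subsets of ℝ whose union is all of ℝ equals 2^{ℵ₀}. -/
open scoped Cardinal

lemma meagre_singleton_real (x : ℝ) : IsMeagre ({x} : Set ℝ) :=
  residual_of_dense_open isOpen_compl_singleton (dense_compl_singleton x)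

/-- If there is a Luzin set (an uncountable set of reals whose intersection with every
meager set is countable) of cardinality `2^ℵ₀`, then `cov(𝓜) = 2^ℵ₀`: the least
cardinality of a family of meager subsets of `ℝ` covering `ℝ` equals `2^ℵ₀`. -/
theorem luzin_set_continuum_implies_cov_meager_eq_continuum (L : Set ℝ)
    (hL : ¬ L.Countable)
    (hLuzin : ∀ M : Set ℝ, IsMeagre M → (L ∩ M).Countable)
    (hcard : #L = Cardinal.continuum) :
    sInf {c : Cardinal | ∃ F : Set (Set ℝ), #F = c ∧
        (∀ M ∈ F, IsMeagre M) ∧ ⋃₀ F = Set.univ}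
      = Cardinal.continuum := by
  apply le_antisymm
  · -- singletons cover ℝ
    apply csInf_le'
    refine ⟨Set.range (fun x : ℝ => ({x} : Set ℝ)), ?_, ?_, ?_⟩
    · rw [Cardinal.mk_range_eq _ (fun a b h => Set.singleton_eq_singleton_iff.mp h)]
      simp [Cardinal.mk_real]
    · rintro M ⟨x, rfl⟩
      exact meagre_singleton_real x
    · ext y; simp
  · refine le_csInf ⟨Cardinal.continuum, Set.range (fun x : ℝ => ({x} : Set ℝ)), ?_, ?_, ?_⟩ ?_
    · rw [Cardinal.mk_range_eq _ (fun a b h => Set.singleton_eq_singleton_iff.mp h)]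
      simp [Cardinal.mk_real]
    · rintro M ⟨x, rfl⟩
      exact meagre_singleton_real x
    · ext y; simp
    · rintro c ⟨F, rfl, hmeagre, hcover⟩
      by_contra hlt
      push_neg at hlt
      -- L = ⋃₀ ((L ∩ ·) '' F)
      have hLsub : L ⊆ ⋃₀ ((fun M => L ∩ M) '' F) := by
        intro x hx
        have : x ∈ ⋃₀ F := hcover ▸ Set.mem_univ x
        obtain ⟨M, hM, hxM⟩ := this
        exact ⟨L ∩ M, ⟨M, hM, rfl⟩, hx, hxM⟩
      have h1 : #L ≤ #((fun M => L ∩ M) '' F) * ⨆ s : ((fun M => L ∩ M) '' F), #s :=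
        le_trans (Cardinal.mk_le_mk_of_subset hLsub) (Cardinal.mk_sUnion_le _)
      have h2 : #((fun M => L ∩ M) '' F) ≤ #F := Cardinal.mk_image_le
      have h3 : (⨆ s : ((fun M => L ∩ M) '' F), #s) ≤ Cardinal.aleph0 := by
        apply ciSup_le'
        rintro ⟨s, M, hM, rfl⟩
        exact Set.Countable.le_aleph0 (hLuzin M (hmeagre M hM))
      have : #L ≤ #F * Cardinal.aleph0 := le_trans h1 (mul_le_mul' h2 h3)
      have hlt2 : #F * Cardinal.aleph0 < Cardinal.continuum :=
        Cardinal.mul_lt_of_lt Cardinal.aleph0_le_continuum hlt Cardinal.aleph0_lt_continuum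
      rw [hcard] at this
      exact absurd (lt_of_le_of_lt this hlt2) (lt_irrefl _)
end

section
/- Let g : ℕ → ℕ satisfy g(i) ≥ i for all i. For each i, let U_i be the (finite, nonempty) set of all subsets u of the set 2^{g(i)} of binary strings of length g(i) with |u| = 2^{g(i)−i}, equipped with the uniform probability measure μ_i, and let μ be the product probability measure on U = ∏_{i ∈ ω} U_i. Then for every sequence of sets S_i ⊆ 2^{g(i)}, the set { u ∈ U : there are infinitely many i with |S_i| > 4^i and u(i) ∩ S_i = ∅ } has μ-measure zero. -/
open scoped ENNReal

/-- `U_i`: the set of all subsets `u` of the set `2^{g(i)}` of binary strings of length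
`g(i)` with `|u| = 2^{g(i)-i}`. -/
def UComp (g : ℕ → ℕ) (i : ℕ) : Type :=
  {u : Finset (Fin (g i) → Bool) // u.card = 2 ^ (g i - i)}

/-- Each finite factor `U_i` carries the discrete σ-algebra (so the product space
`U = ∏ i, U_i` carries the product σ-algebra). -/
instance (g : ℕ → ℕ) (i : ℕ) : MeasurableSpace (UComp g i) := ⊤

open Finset in
lemma countCard (X : Type) [Fintype X] [DecidableEq X] (k : ℕ) (S : Finset X) :
    Nat.card {v : {u : Finset X // u.card = k} // v.1 ∩ S = ∅}
      = (Fintype.card X - S.card).choose k := by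
  have e : {v : {u : Finset X // u.card = k} // v.1 ∩ S = ∅} ≃ ↥(Sᶜ.powersetCard k) :=
    { toFun := fun v => ⟨v.1.1, by
        simp only [mem_powersetCard]
        refine ⟨fun x hx => ?_, v.1.2⟩
        simp only [mem_compl]
        intro hxS
        have : x ∈ v.1.1 ∩ S := mem_inter.2 ⟨hx, hxS⟩
        simp [v.2] at this⟩
      invFun := fun w => ⟨⟨w.1, (mem_powersetCard.1 w.2).2⟩, by
        ext x
        simp only [mem_inter, notMem_empty, iff_false, not_and]
        intro hx hxS
        have := (mem_powersetCard.1 w.2).1 hx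
        simp [hxS] at this⟩
      left_inv := fun v => by ext : 2; rfl
      right_inv := fun w => rfl }
  rw [Nat.card_eq_of_bijective e e.bijective, Nat.card_eq_fintype_card,
    Fintype.card_coe, card_powersetCard, card_compl]

open Finset in
lemma countU (X : Type) [Fintype X] [DecidableEq X] (k : ℕ) :
    Nat.card {u : Finset X // u.card = k} = (Fintype.card X).choose k := by
  have e : {u : Finset X // u.card = k} ≃
      {v : {u : Finset X // u.card = k} // v.1 ∩ (∅ : Finset X) = ∅} :=
    { toFun := fun v => ⟨v, by simp⟩
      invFun := fun w => w.1
      left_inv := fun v => rfl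
      right_inv := fun w => rfl }
  rw [Nat.card_eq_of_bijective e e.bijective, countCard]
  simp

lemma nat1 (N k : ℕ) : ∀ s, Nat.choose (N - s) k * N ^ s ≤ Nat.choose N k * (N - k) ^ s := by
  rcases Nat.eq_zero_or_pos k with rfl | hk
  · intro s; simp
  intro s
  induction s with
  | zero => simp
  | succ s ih =>
    rcases le_or_gt N (s + 1) with h | h
    · have : N - (s + 1) = 0 := by omega
      rw [this, Nat.choose_eq_zero_of_lt hk]
      simp
    · have hNs : 0 < N - s := by omega
      refine Nat.le_of_mul_le_mul_right ?_ hNs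
      have hid : Nat.choose (N - s - 1) k * (N - s) = Nat.choose (N - s) k * (N - s - k) := by
        have := Nat.choose_mul_succ_eq (N - s - 1) k
        have h1 : N - s - 1 + 1 = N - s := by omega
        rw [h1] at this
        exact this
      have hsub : N - (s + 1) = N - s - 1 := by omega
      have hkey : (N - s - k) * N ≤ (N - k) * (N - s) := by
        rcases le_or_gt (s + k) N with h2 | h2
        · obtain ⟨t, ht⟩ : ∃ t, N = s + k + t := ⟨N - s - k, by omega⟩
          subst ht
          have e1 : s + k + t - s - k = t := by omega
          have e2 : s + k + t - k = s + t := by omega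
          have e3 : s + k + t - s = k + t := by omega
          rw [e1, e2, e3]
          nlinarith
        · have : N - s - k = 0 := by omega
          simp [this]
      calc Nat.choose (N - (s+1)) k * N ^ (s+1) * (N - s)
          = (Nat.choose (N - s - 1) k * (N - s)) * (N ^ s * N) := by rw [hsub]; ring
        _ = (Nat.choose (N - s) k * N ^ s) * ((N - s - k) * N) := by rw [hid]; ring
        _ ≤ (Nat.choose N k * (N - k) ^ s) * ((N - k) * (N - s)) :=
            Nat.mul_le_mul ih hkey
        _ = Nat.choose N k * (N - k) ^ (s+1) * (N - s) := by ring

lemma nat2 (m : ℕ) (hm : 1 ≤ m) : ∀ n, (m - 1 + n) * (m - 1) ^ n ≤ (m - 1) * m ^ n := by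
  intro n
  induction n with
  | zero => simp
  | succ n ih =>
    have hle : (m - 1) ^ (n + 1) ≤ (m - 1) * m ^ n := by
      rw [pow_succ, mul_comm]
      exact Nat.mul_le_mul_left _ (Nat.pow_le_pow_left (Nat.sub_le m 1) n)
    calc (m - 1 + (n + 1)) * (m - 1) ^ (n + 1)
        = ((m - 1 + n) * (m - 1) ^ n) * (m - 1) + (m - 1) ^ (n + 1) := by ring
      _ ≤ ((m - 1) * m ^ n) * (m - 1) + (m - 1) * m ^ n :=
          Nat.add_le_add (Nat.mul_le_mul_right _ ih) hle
      _ = (m - 1) * (m ^ n * (m - 1) + m ^ n) := by ring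
      _ ≤ (m - 1) * m ^ (n + 1) := by
          apply Nat.mul_le_mul_left
          have h1 : m ^ n * (m - 1) + m ^ n = m ^ n * (m - 1 + 1) := by ring
          rw [h1, pow_succ]
          exact Nat.mul_le_mul_left _ (by omega)

lemma nat3 (m s : ℕ) (hm : 2 ≤ m) (hs : m ^ 2 ≤ s) : m * (m - 1) ^ s ≤ m ^ s := by
  have h1 : m * (m - 1) * (m - 1) ^ s ≤ (m - 1 + s) * (m - 1) ^ s := by
    apply Nat.mul_le_mul_right
    obtain ⟨t, rfl⟩ : ∃ t, m = t + 1 := ⟨m - 1, by omega⟩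
    have e : t + 1 - 1 = t := by omega
    rw [e]
    nlinarith
  have h3 : m * (m - 1) * (m - 1) ^ s ≤ (m - 1) * m ^ s := le_trans h1 (nat2 m (by omega) s)
  have hpos : 0 < m - 1 := by omega
  refine Nat.le_of_mul_le_mul_left ?_ hpos
  calc (m - 1) * (m * (m - 1) ^ s) = m * (m - 1) * (m - 1) ^ s := by ring
    _ ≤ (m - 1) * m ^ s := h3

lemma natkey (i N k s : ℕ) (hk : 0 < k) (hN : N = k * 2 ^ i) (hs : 4 ^ i < s) :
    2 ^ i * Nat.choose (N - s) k ≤ Nat.choose N k := by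
  rcases Nat.eq_zero_or_pos i with rfl | hi
  · simpa using Nat.choose_le_choose k (Nat.sub_le N s)
  set m := 2 ^ i with hm
  have hm2 : 2 ≤ m := by
    have : 2 ^ 1 ≤ 2 ^ i := Nat.pow_le_pow_right (by norm_num) hi
    simpa using this
  have hNk : N - k = k * (m - 1) := by
    rw [hN, Nat.mul_sub, mul_one]
  have h1 := nat1 N k s
  rw [hNk] at h1
  rw [hN] at h1
  rw [mul_pow, mul_pow] at h1
  have hA : Nat.choose (k * m - s) k * m ^ s ≤ Nat.choose (k * m) k * (m - 1) ^ s := by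
    have hks : 0 < k ^ s := Nat.pow_pos hk
    refine Nat.le_of_mul_le_mul_left ?_ hks
    calc k ^ s * (Nat.choose (k * m - s) k * m ^ s)
        = Nat.choose (k * m - s) k * (k ^ s * m ^ s) := by ring
      _ ≤ Nat.choose (k * m) k * (k ^ s * (m - 1) ^ s) := h1
      _ = k ^ s * (Nat.choose (k * m) k * (m - 1) ^ s) := by ring
  have hm4 : m ^ 2 ≤ s := by
    have : m ^ 2 = 4 ^ i := by
      rw [hm, ← pow_mul, show (4:ℕ) = 2 ^ 2 from rfl, ← pow_mul, mul_comm]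
    omega
  have h2 := nat3 m s hm2 hm4
  have hpos : 0 < (m - 1) ^ s := Nat.pow_pos (by omega)
  rw [hN]
  refine Nat.le_of_mul_le_mul_right ?_ hpos
  calc m * Nat.choose (k * m - s) k * (m - 1) ^ s
      = Nat.choose (k * m - s) k * (m * (m - 1) ^ s) := by ring
    _ ≤ Nat.choose (k * m - s) k * m ^ s := Nat.mul_le_mul_left _ h2
    _ ≤ Nat.choose (k * m) k * (m - 1) ^ s := hA


/-- Let `g : ℕ → ℕ` with `g(i) ≥ i`, and let `μ` be the product of the uniform probability
measures `μ_i` on the finite sets `U_i` (so that the measure of a cylinder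
`{u : ∀ i ∈ F, u i ∈ A i}` is `∏_{i ∈ F} |A i| / |U_i|`).  Then for any sets
`S_i ⊆ 2^{g(i)}`, the set of `u ∈ U` such that for infinitely many `i` one has
`|S_i| > 4^i` and `u(i) ∩ S_i = ∅` has `μ`-measure zero. -/
theorem product_measure_infinitely_often_avoid_null (g : ℕ → ℕ) (hg : ∀ i, i ≤ g i)
    (μ : MeasureTheory.Measure (∀ i, UComp g i))
    (hμ : MeasureTheory.IsProbabilityMeasure μ)
    (hprod : ∀ (F : Finset ℕ) (A : ∀ i, Set (UComp g i)),
      μ {u | ∀ i ∈ F, u i ∈ A i}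
        = ∏ i ∈ F, (Nat.card (A i) : ℝ≥0∞) / (Nat.card (UComp g i) : ℝ≥0∞))
    (S : ∀ i, Finset (Fin (g i) → Bool)) :
    μ {u | {i | 4 ^ i < (S i).card ∧ (u i).1 ∩ S i = ∅}.Infinite} = 0 := by
  classical
  have key : ∀ i : ℕ, μ {u | 4 ^ i < (S i).card ∧ (u i).1 ∩ S i = ∅} ≤ (2⁻¹ : ℝ≥0∞) ^ i := by
    intro i
    by_cases h : 4 ^ i < (S i).card
    · have hset : {u : ∀ j, UComp g j | 4 ^ i < (S i).card ∧ (u i).1 ∩ S i = ∅}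
          = {u | ∀ j ∈ ({i} : Finset ℕ), u j ∈ {v : UComp g j | v.1 ∩ S j = ∅}} := by
        ext u
        simp [h]
      rw [hset, hprod, Finset.prod_singleton]
      have hX : Fintype.card (Fin (g i) → Bool) = 2 ^ g i := by simp
      have hcardA : Nat.card {v : UComp g i | v.1 ∩ S i = ∅}
          = (2 ^ g i - (S i).card).choose (2 ^ (g i - i)) := by
        rw [← hX]
        exact countCard (Fin (g i) → Bool) (2 ^ (g i - i)) (S i)
      have hcardU : Nat.card (UComp g i) = (2 ^ g i).choose (2 ^ (g i - i)) := by
        rw [← hX]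
        exact countU (Fin (g i) → Bool) (2 ^ (g i - i))
      set k := 2 ^ (g i - i) with hkdef
      have hk : 0 < k := Nat.pow_pos (by norm_num)
      have hNkm : 2 ^ g i = k * 2 ^ i := by
        have hgi := hg i
        rw [hkdef, ← pow_add]
        congr 1
        omega
      have hnat : 2 ^ i * (2 ^ g i - (S i).card).choose k ≤ (2 ^ g i).choose k :=
        natkey i (2 ^ g i) k ((S i).card) hk hNkm h
      have hUpos : 0 < (2 ^ g i).choose k :=
        Nat.choose_pos (by rw [hNkm]; exact Nat.le_mul_of_pos_right k (Nat.pow_pos (by norm_num)))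
      rw [hcardA, hcardU]
      rw [ENNReal.div_le_iff (by exact_mod_cast hUpos.ne') (ENNReal.natCast_ne_top _)]
      have h2 : ((2:ℝ≥0∞)⁻¹) ^ i * ((2 ^ g i).choose k : ℝ≥0∞)
          = ((2 ^ g i).choose k : ℝ≥0∞) / 2 ^ i := by
        rw [← ENNReal.inv_pow, div_eq_mul_inv, mul_comm]
      rw [h2, ENNReal.le_div_iff_mul_le (Or.inl (by positivity)) (Or.inl (by
        exact ENNReal.pow_ne_top ENNReal.ofNat_ne_top))]
      rw [mul_comm]
      exact_mod_cast hnat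
    · have hset : {u : ∀ j, UComp g j | 4 ^ i < (S i).card ∧ (u i).1 ∩ S i = ∅} = ∅ := by
        ext u
        simp [h]
      rw [hset]
      simp
  have hsum : ∑' i, μ {u | 4 ^ i < (S i).card ∧ (u i).1 ∩ S i = ∅} ≠ ∞ := by
    refine ne_top_of_le_ne_top ?_ (ENNReal.tsum_le_tsum key)
    rw [ENNReal.tsum_geometric, ENNReal.one_sub_inv_two]
    simp
  have hfreq := MeasureTheory.measure_setOf_frequently_eq_zero
    (μ := μ) (p := fun (i : ℕ) (u : ∀ j, UComp g j) => 4 ^ i < (S i).card ∧ (u i).1 ∩ S i = ∅) hsum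
  have hseteq : {u : ∀ j, UComp g j | {i | 4 ^ i < (S i).card ∧ (u i).1 ∩ S i = ∅}.Infinite}
      = {u : ∀ j, UComp g j | ∃ᶠ i in Filter.atTop, 4 ^ i < (S i).card ∧ (u i).1 ∩ S i = ∅} := by
    ext u
    exact (Nat.frequently_atTop_iff_infinite).symm
  rw [hseteq]
  exact hfreq
end
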